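/- Let H be a finite-index subgroup of ℤ², let G = ℤ²/H, and let ∂_2 : ℤG → ℤG ⊕ ℤG be the homomorphism with ∂_2(δ_g) = (δ_{g+[e_2]} − δ_g) ⊕ (δ_g − δ_{g+[e_1]}). Then ker(∂_2) = {c · 1_G : c ∈ ℤ}, the infinite cyclic subgroup generated by the constant function 1_G = Σ_{g ∈ G} δ_g. -/
import Mathlib


/-- for a finite-index subgroup `H ≤ ℤ²` with `G = ℤ²/H`, and `∂₂` the
homomorphism `ℤG → ℤG ⊕ ℤG` with
`∂₂(δ_g) = (δ_{g+[e₂]} - δ_g) ⊕ (δ_g - δ_{g+[e₁]})`, one has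
`ker(∂₂) = {c · 1_G : c ∈ ℤ}`, the infinite cyclic subgroup generated by the constant
function `1_G = Σ_{g ∈ G} δ_g`. -/
theorem ker_d2_constants (H : AddSubgroup (ℤ × ℤ))
    [Fintype ((ℤ × ℤ) ⧸ H)] [DecidableEq ((ℤ × ℤ) ⧸ H)]
    (d2 : (((ℤ × ℤ) ⧸ H) → ℤ) →+ ((((ℤ × ℤ) ⧸ H) → ℤ) × (((ℤ × ℤ) ⧸ H) → ℤ)))
    (hd2 : ∀ g : (ℤ × ℤ) ⧸ H,
      d2 (Pi.single g (1 : ℤ)) =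
        (Pi.single (g + QuotientAddGroup.mk ((0, 1) : ℤ × ℤ)) (1 : ℤ) - Pi.single g (1 : ℤ),
         Pi.single g (1 : ℤ) - Pi.single (g + QuotientAddGroup.mk ((1, 0) : ℤ × ℤ)) (1 : ℤ))) :
    ((fun _ : (ℤ × ℤ) ⧸ H => (1 : ℤ)) = ∑ g : (ℤ × ℤ) ⧸ H, Pi.single g (1 : ℤ)) ∧
    ∀ f : ((ℤ × ℤ) ⧸ H) → ℤ,
      f ∈ d2.ker ↔ ∃ c : ℤ, f = c • fun _ : (ℤ × ℤ) ⧸ H => (1 : ℤ) := by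

  set e1 : (ℤ × ℤ) ⧸ H := QuotientAddGroup.mk ((1,0) : ℤ × ℤ) with he1
  set e2 : (ℤ × ℤ) ⧸ H := QuotientAddGroup.mk ((0,1) : ℤ × ℤ) with he2
  have part1 : (fun _ : (ℤ × ℤ) ⧸ H => (1:ℤ)) = ∑ g : (ℤ × ℤ) ⧸ H, Pi.single g (1:ℤ) := by
    funext h
    rw [Finset.sum_apply]
    simp [Pi.single_apply]
  refine ⟨part1, ?_⟩
  have key : ∀ f : (ℤ × ℤ) ⧸ H → ℤ, ∀ h : (ℤ × ℤ) ⧸ H,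
      (d2 f).1 h = f (h - e2) - f h ∧ (d2 f).2 h = f h - f (h - e1) := by
    intro f h
    have hf : f = ∑ g : (ℤ × ℤ) ⧸ H, f g • Pi.single g (1:ℤ) := by
      funext x
      rw [Finset.sum_apply]
      simp [Pi.single_apply]
    have hd : d2 f = ∑ g : (ℤ × ℤ) ⧸ H, f g •
        ((Pi.single (g + e2) (1:ℤ) - Pi.single g 1 : (ℤ × ℤ) ⧸ H → ℤ),
         (Pi.single g (1:ℤ) - Pi.single (g + e1) 1 : (ℤ × ℤ) ⧸ H → ℤ)) := by
      conv_lhs => rw [hf]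
      rw [map_sum]
      refine Finset.sum_congr rfl fun g _ => ?_
      rw [map_zsmul, hd2]
    have sum1 : ∀ x : (ℤ × ℤ) ⧸ H, (∑ g : (ℤ × ℤ) ⧸ H, f g * ((Pi.single (g + x) (1:ℤ) : (ℤ × ℤ) ⧸ H → ℤ) h)) = f (h - x) := by
      intro x
      rw [Finset.sum_eq_single (h - x)]
      · rw [Pi.single_apply, if_pos (by abel), mul_one]
      · intro g _ hg
        rw [Pi.single_apply, if_neg, mul_zero]
        intro hgh
        exact hg (eq_sub_of_add_eq hgh.symm)
      · intro habs; exact absurd (Finset.mem_univ _) habs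
    have sum0 : (∑ g : (ℤ × ℤ) ⧸ H, f g * ((Pi.single g (1:ℤ) : (ℤ × ℤ) ⧸ H → ℤ) h)) = f h := by
      simp [Pi.single_apply]
    constructor
    · rw [hd]
      simp only [Prod.fst_sum, Prod.smul_fst, Finset.sum_apply, Pi.smul_apply, smul_eq_mul,
        Pi.sub_apply, mul_sub]
      rw [Finset.sum_sub_distrib, sum1, sum0]
    · rw [hd]
      simp only [Prod.snd_sum, Prod.smul_snd, Finset.sum_apply, Pi.smul_apply, smul_eq_mul,
        Pi.sub_apply, mul_sub]
      rw [Finset.sum_sub_distrib, sum0, sum1]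
  intro f
  constructor
  · intro hker
    have h0 : d2 f = 0 := hker
    have hinv2 : ∀ h : (ℤ × ℤ) ⧸ H, f (h - e2) = f h := by
      intro h
      have hk := (key f h).1
      rw [h0] at hk
      simpa [sub_eq_zero] using hk.symm
    have hinv1 : ∀ h : (ℤ × ℤ) ⧸ H, f (h - e1) = f h := by
      intro h
      have hk := (key f h).2
      rw [h0] at hk
      exact (sub_eq_zero.mp hk.symm).symm
    set S : AddSubgroup ((ℤ × ℤ) ⧸ H) :=
      { carrier := {x : (ℤ × ℤ) ⧸ H | ∀ g : (ℤ × ℤ) ⧸ H, f (g + x) = f g}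
        zero_mem' := by intro g; simp
        add_mem' := by
          intro a b ha hb g
          rw [← add_assoc, hb, ha]
        neg_mem' := by
          intro a ha g
          have := ha (g + -a)
          simpa using this.symm } with hS
    have he2S : e2 ∈ S := by
      intro g
      have := hinv2 (g + e2)
      simpa using this.symm
    have he1S : e1 ∈ S := by
      intro g
      have := hinv1 (g + e1)
      simpa using this.symm
    have hall : ∀ x : (ℤ × ℤ) ⧸ H, x ∈ S := by
      intro x
      obtain ⟨⟨a, b⟩, rfl⟩ := QuotientAddGroup.mk_surjective x
      have hx : (QuotientAddGroup.mk ((a,b) : ℤ × ℤ) : (ℤ × ℤ) ⧸ H) = a • e1 + b • e2 := by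
        have hab : ((a, b) : ℤ × ℤ) = a • ((1,0) : ℤ × ℤ) + b • ((0,1) : ℤ × ℤ) := by
          simp
        rw [hab]
        rw [show (QuotientAddGroup.mk : ℤ × ℤ → (ℤ × ℤ) ⧸ H) = (QuotientAddGroup.mk' H) from rfl]
        rw [map_add, map_zsmul, map_zsmul]
        rfl
      rw [hx]
      exact S.add_mem (S.zsmul_mem he1S a) (S.zsmul_mem he2S b)
    refine ⟨f 0, funext fun g => ?_⟩
    have hg := hall g 0
    rw [zero_add] at hg
    simp [hg]
  · rintro ⟨c, rfl⟩
    rw [AddMonoidHom.mem_ker, Prod.ext_iff]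
    constructor
    · funext h
      have := (key (c • fun _ : (ℤ × ℤ) ⧸ H => (1:ℤ)) h).1
      simpa using this
    · funext h
      have := (key (c • fun _ : (ℤ × ℤ) ⧸ H => (1:ℤ)) h).2
      simpa using this
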